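/- Let p be an even positive integer with ∫_S |φ|^p dπ < ∞, and suppose that ν(|φ|^k) ≤ ν(|φ|^p)^{k/p} for every integer 1 ≤ k ≤ p. Then E[|μ(φ)|^p] ≤ e · p^p · ν(|φ|^p), where e is Euler's number. -/

import Mathlib

open MeasureTheory ProbabilityTheory PowerSeries Finset
open scoped ENNReal

namespace CPAux

/-- Bell numbers via the standard recursion. -/
def Bell : ℕ → ℕ
  | 0 => 1
  | (k+1) => ∑ j ∈ (Finset.range (k+1)).attach,
      (k.choose j.1) * Bell j.1
  decreasing_by exact Finset.mem_range.mp j.2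

lemma Bell_succ (k : ℕ) :
    Bell (k+1) = ∑ j ∈ Finset.range (k+1), k.choose j * Bell j := by
  rw [Bell, ← Finset.sum_attach (Finset.range (k+1)) (fun j => k.choose j * Bell j)]

lemma Bell_le (k : ℕ) : Bell k ≤ k ^ k := by
  induction k using Nat.strong_induction_on with
  | _ k ih =>
    match k with
    | 0 => simp [Bell]
    | (k+1) =>
      rw [Bell_succ]
      have h1 : ∀ j ∈ Finset.range (k+1), k.choose j * Bell j ≤ k.choose j * (k ^ j * 1 ^ (k - j)) := by
        intro j hj
        have hj' : j < k + 1 := Finset.mem_range.mp hj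
        have : Bell j ≤ j ^ j := ih j (by omega)
        have h2 : j ^ j ≤ k ^ j := Nat.pow_le_pow_left (by omega) j
        calc k.choose j * Bell j ≤ k.choose j * (k ^ j) := by
              exact Nat.mul_le_mul_left _ (le_trans this h2)
          _ = k.choose j * (k ^ j * 1 ^ (k - j)) := by simp
      calc ∑ j ∈ Finset.range (k+1), k.choose j * Bell j
          ≤ ∑ j ∈ Finset.range (k+1), k.choose j * (k ^ j * 1 ^ (k - j)) :=
            Finset.sum_le_sum h1
        _ = ∑ j ∈ Finset.range (k+1), k ^ j * 1 ^ (k - j) * k.choose j := by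
            apply Finset.sum_congr rfl; intros; ring
        _ = (k + 1) ^ k := by
            rw [add_pow]; apply Finset.sum_congr rfl; intros; simp
        _ ≤ (k + 1) ^ (k + 1) := Nat.pow_le_pow_right (by omega) (by omega)

noncomputable def F (A : ℕ → ℝ≥0∞) : PowerSeries ℝ≥0∞ :=
  PowerSeries.mk fun j => A j / (j.factorial : ℝ≥0∞)

noncomputable def gg (A : ℕ → ℝ≥0∞) (n k : ℕ) : ℝ≥0∞ :=
  (k.factorial : ℝ≥0∞) * PowerSeries.coeff k (F A ^ n)

lemma gg_zero (A : ℕ → ℝ≥0∞) (k : ℕ) : gg A 0 k = if k = 0 then 1 else 0 := by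
  rw [gg, pow_zero, PowerSeries.coeff_one]
  split <;> simp_all

lemma gg_zero' (A : ℕ → ℝ≥0∞) (n : ℕ) (hA0 : A 0 = 1) : gg A n 0 = 1 := by
  rw [gg]
  simp only [PowerSeries.coeff_zero_eq_constantCoeff, map_pow]
  have : constantCoeff (F A) = 1 := by
    rw [F, ← PowerSeries.coeff_zero_eq_constantCoeff, PowerSeries.coeff_mk, hA0]
    simp
  simp [this]

lemma term_eq (A : ℕ → ℝ≥0∞) (n j i k : ℕ) (h : j + i = k) (x : ℝ≥0∞) :
    (k.factorial : ℝ≥0∞) * (PowerSeries.coeff j (F A ^ n) * (x / (i.factorial : ℝ≥0∞)))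
      = (k.choose j : ℝ≥0∞) * gg A n j * x := by
  have hfac : (k.factorial : ℝ≥0∞) = (k.choose j : ℝ≥0∞) * (j.factorial : ℝ≥0∞) * (i.factorial : ℝ≥0∞) := by
    have h1 := Nat.add_choose_mul_factorial_mul_factorial j i
    have h2 : (j+i).choose i = (j+i).choose j := by
      rw [← Nat.choose_symm (Nat.le_add_right j i)]
      congr 1
      omega
    rw [← h]
    rw [h2] at h1
    push_cast [← h1]
    ring
  rw [hfac, gg]
  have hi0 : (i.factorial : ℝ≥0∞) ≠ 0 := by exact_mod_cast i.factorial_ne_zero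
  have hitop : (i.factorial : ℝ≥0∞) ≠ ⊤ := by simp
  calc (k.choose j : ℝ≥0∞) * (j.factorial : ℝ≥0∞) * (i.factorial : ℝ≥0∞) *
        (PowerSeries.coeff j (F A ^ n) * (x / (i.factorial : ℝ≥0∞)))
      = (k.choose j : ℝ≥0∞) * ((j.factorial : ℝ≥0∞) * PowerSeries.coeff j (F A ^ n)) *
        ((i.factorial : ℝ≥0∞) * (x / (i.factorial : ℝ≥0∞))) := by ring
    _ = _ := by rw [ENNReal.mul_div_cancel hi0 hitop]

lemma gg_succ (A : ℕ → ℝ≥0∞) (n k : ℕ) :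
    gg A (n+1) k = ∑ ji ∈ Finset.HasAntidiagonal.antidiagonal k,
      (k.choose ji.1 : ℝ≥0∞) * gg A n ji.1 * A ji.2 := by
  rw [gg, pow_succ, PowerSeries.coeff_mul, Finset.mul_sum]
  apply Finset.sum_congr rfl
  rintro ⟨j, i⟩ hji
  have h : j + i = k := Finset.HasAntidiagonal.mem_antidiagonal.mp hji
  have : (PowerSeries.coeff i) (F A) = A i / (i.factorial : ℝ≥0∞) := by
    rw [F, PowerSeries.coeff_mk]
  rw [this, term_eq A n j i k h]

lemma coeff_deriv_F (A : ℕ → ℝ≥0∞) (i : ℕ) :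
    PowerSeries.coeff i (PowerSeries.derivative ℝ≥0∞ (F A)) = A (i+1) / (i.factorial : ℝ≥0∞) := by
  have hne : ((i:ℝ≥0∞) + 1) ≠ 0 := by
    simp
  rw [PowerSeries.coeff_derivative, F, PowerSeries.coeff_mk, Nat.factorial_succ]
  push_cast
  rw [ENNReal.div_eq_inv_mul, ENNReal.mul_inv (Or.inl hne) (Or.inl (by simp)),
    ENNReal.div_eq_inv_mul]
  have h1 : ((i:ℝ≥0∞) + 1)⁻¹ * ((i:ℝ≥0∞)+1) = 1 :=
    ENNReal.inv_mul_cancel hne (by simp)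
  calc ((i:ℝ≥0∞) + 1)⁻¹ * (i.factorial : ℝ≥0∞)⁻¹ * A (i + 1) * ((i:ℝ≥0∞) + 1)
      = (((i:ℝ≥0∞) + 1)⁻¹ * ((i:ℝ≥0∞)+1)) * ((i.factorial : ℝ≥0∞)⁻¹ * A (i + 1)) := by ring
    _ = (i.factorial : ℝ≥0∞)⁻¹ * A (i + 1) := by rw [h1, one_mul]

lemma gg_stein (A : ℕ → ℝ≥0∞) (n k : ℕ) :
    gg A (n+1) (k+1) = (n+1 : ℝ≥0∞) * ∑ ji ∈ Finset.HasAntidiagonal.antidiagonal k,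
      (k.choose ji.1 : ℝ≥0∞) * gg A n ji.1 * A (ji.2 + 1) := by
  have hD : PowerSeries.derivative ℝ≥0∞ (F A ^ (n+1))
      = (n+1) • ((F A) ^ n • PowerSeries.derivative ℝ≥0∞ (F A)) := by
    have h := Derivation.leibniz_pow (PowerSeries.derivative ℝ≥0∞) (a := F A) (n+1)
    simpa using h
  have hcoeff : PowerSeries.coeff (k+1) (F A ^ (n+1)) * ((k:ℝ≥0∞)+1)
      = (n+1 : ℝ≥0∞) * ∑ ji ∈ Finset.HasAntidiagonal.antidiagonal k,
          PowerSeries.coeff ji.1 (F A ^ n) * (A (ji.2+1) / (ji.2.factorial : ℝ≥0∞)) := by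
    calc PowerSeries.coeff (k+1) (F A ^ (n+1)) * ((k:ℝ≥0∞)+1)
        = PowerSeries.coeff k (PowerSeries.derivative ℝ≥0∞ (F A ^ (n+1))) := by
          rw [PowerSeries.coeff_derivative]
      _ = PowerSeries.coeff k ((n+1) • ((F A) ^ n * PowerSeries.derivative ℝ≥0∞ (F A))) := by
          rw [hD, smul_eq_mul]
      _ = (n+1 : ℝ≥0∞) * PowerSeries.coeff k ((F A) ^ n * PowerSeries.derivative ℝ≥0∞ (F A)) := by
          rw [map_nsmul, nsmul_eq_mul]
          push_cast
          ring
      _ = _ := by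
          rw [PowerSeries.coeff_mul, Finset.mul_sum, Finset.mul_sum]
          apply Finset.sum_congr rfl
          rintro ⟨j, i⟩ hji
          rw [coeff_deriv_F]
  have hfacsucc : ((k+1).factorial : ℝ≥0∞) = (k.factorial : ℝ≥0∞) * ((k:ℝ≥0∞)+1) := by
    rw [Nat.factorial_succ]
    push_cast
    ring
  calc gg A (n+1) (k+1)
      = (k.factorial : ℝ≥0∞) * (PowerSeries.coeff (k+1) (F A ^ (n+1)) * ((k:ℝ≥0∞)+1)) := by
        rw [gg, hfacsucc]; ring
    _ = (n+1 : ℝ≥0∞) * ∑ ji ∈ Finset.HasAntidiagonal.antidiagonal k,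
          (k.factorial : ℝ≥0∞) * (PowerSeries.coeff ji.1 (F A ^ n) * (A (ji.2+1) / (ji.2.factorial : ℝ≥0∞))) := by
        rw [hcoeff, Finset.mul_sum, Finset.mul_sum, ← Finset.mul_sum, ← Finset.mul_sum,
          ← mul_assoc, mul_comm (k.factorial : ℝ≥0∞) ((n:ℝ≥0∞)+1), mul_assoc,
          Finset.mul_sum]
    _ = _ := by
        congr 1
        apply Finset.sum_congr rfl
        rintro ⟨j, i⟩ hji
        exact term_eq A n j i k (Finset.HasAntidiagonal.mem_antidiagonal.mp hji) (A (i+1))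

section Prob

variable {Ω : Type*} [MeasurableSpace Ω] {P : Measure Ω} [IsProbabilityMeasure P]
  {S : Type*} [MeasurableSpace S] {π : Measure S} [IsProbabilityMeasure π]

/-- moments of partial sums of iid sequence. -/
lemma moment_sum (ξ : ℕ → Ω → S) (hξmeas : ∀ n, Measurable (ξ n))
    (hlaw : ∀ n, Measure.map (ξ n) P = π)
    (hiid : iIndepFun ξ P)
    (φ : S → ℝ) (hφ : Measurable φ) (n k : ℕ) :
    ∫⁻ ω, (∑ i ∈ Finset.range n, ENNReal.ofReal |φ (ξ i ω)|) ^ k ∂P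
      = gg (fun j => ∫⁻ s, ENNReal.ofReal |φ s| ^ j ∂π) n k := by
  set A : ℕ → ℝ≥0∞ := fun j => ∫⁻ s, ENNReal.ofReal |φ s| ^ j ∂π with hA
  have hYmeas : ∀ i : ℕ, Measurable (fun ω => ENNReal.ofReal |φ (ξ i ω)|) :=
    fun i => ((hφ.comp (hξmeas i)).abs).ennreal_ofReal
  have hSmeas : ∀ m : ℕ, Measurable (fun ω => ∑ i ∈ Finset.range m, ENNReal.ofReal |φ (ξ i ω)|) :=
    fun m => Finset.measurable_sum _ (fun i _ => hYmeas i)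
  have hAeq : ∀ i m : ℕ, ∫⁻ ω, (ENNReal.ofReal |φ (ξ i ω)|) ^ m ∂P = A m := by
    intro i m
    have h0 : A m = ∫⁻ s, ENNReal.ofReal |φ s| ^ m ∂π := rfl
    rw [h0, ← hlaw i, lintegral_map ((hφ.abs).ennreal_ofReal.pow_const m) (hξmeas i)]
  induction n generalizing k with
  | zero =>
    simp only [Finset.range_zero, Finset.sum_empty, gg_zero]
    rcases Nat.eq_zero_or_pos k with hk | hk
    · subst hk; simp
    · rw [zero_pow (by omega)]
      simp [Nat.pos_iff_ne_zero.mp hk]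
  | succ n ih =>
    have hterm : ∀ j, j ∈ Finset.range (k+1) →
        ∫⁻ ω, (∑ i ∈ Finset.range n, ENNReal.ofReal |φ (ξ i ω)|) ^ j
          * (ENNReal.ofReal |φ (ξ n ω)|) ^ (k - j) * (k.choose j : ℝ≥0∞) ∂P
        = (k.choose j : ℝ≥0∞) * gg A n j * A (k - j) := by
      intro j _
      have hmeasprod : Measurable (fun ω => (∑ i ∈ Finset.range n, ENNReal.ofReal |φ (ξ i ω)|) ^ j
          * (ENNReal.ofReal |φ (ξ n ω)|) ^ (k - j)) :=
        ((hSmeas n).pow_const j).mul ((hYmeas n).pow_const (k-j))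
      have hind : IndepFun (fun ω => (∑ i ∈ Finset.range n, ENNReal.ofReal |φ (ξ i ω)|) ^ j)
          (fun ω => (ENNReal.ofReal |φ (ξ n ω)|) ^ (k - j)) P := by
        have hbase := hiid.indepFun_finset (Finset.range n) {n}
          (by simp [Finset.disjoint_left]; omega) hξmeas
        have h1 : Measurable (fun v : {x // x ∈ Finset.range n} → S =>
            (∑ i ∈ (Finset.range n).attach, ENNReal.ofReal |φ (v i)|) ^ j) :=
          (Finset.measurable_sum _ (fun i _ =>
            ((hφ.comp (measurable_pi_apply i)).abs).ennreal_ofReal)).pow_const j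
        have h2 : Measurable (fun v : {x // x ∈ ({n} : Finset ℕ)} → S =>
            (ENNReal.ofReal |φ (v ⟨n, by simp⟩)|) ^ (k - j)) :=
          ((hφ.comp (measurable_pi_apply _)).abs).ennreal_ofReal.pow_const (k-j)
        have h3 := hbase.comp h1 h2
        have e1 : ((fun v : {x // x ∈ Finset.range n} → S =>
            (∑ i ∈ (Finset.range n).attach, ENNReal.ofReal |φ (v i)|) ^ j)
              ∘ (fun a (i : {x // x ∈ Finset.range n}) => ξ i a))
            = fun ω => (∑ i ∈ Finset.range n, ENNReal.ofReal |φ (ξ i ω)|) ^ j := by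
          funext ω
          simp only [Function.comp_apply]
          congr 1
          exact Finset.sum_attach (Finset.range n) (fun i => ENNReal.ofReal |φ (ξ i ω)|)
        have e2 : ((fun v : {x // x ∈ ({n} : Finset ℕ)} → S =>
            (ENNReal.ofReal |φ (v ⟨n, by simp⟩)|) ^ (k - j))
              ∘ (fun a (i : {x // x ∈ ({n} : Finset ℕ)}) => ξ i a))
            = fun ω => (ENNReal.ofReal |φ (ξ n ω)|) ^ (k - j) := by
          funext ω
          simp
        rwa [e1, e2] at h3
      rw [lintegral_mul_const _ hmeasprod,
        lintegral_mul_eq_lintegral_mul_lintegral_of_indepFun''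
          ((hSmeas n).pow_const j).aemeasurable ((hYmeas n).pow_const (k-j)).aemeasurable hind,
        ih j, hAeq n (k-j)]
      ring
    calc ∫⁻ ω, (∑ i ∈ Finset.range (n+1), ENNReal.ofReal |φ (ξ i ω)|) ^ k ∂P
        = ∫⁻ ω, ∑ j ∈ Finset.range (k+1),
            (∑ i ∈ Finset.range n, ENNReal.ofReal |φ (ξ i ω)|) ^ j
              * (ENNReal.ofReal |φ (ξ n ω)|) ^ (k - j) * (k.choose j : ℝ≥0∞) ∂P := by
          apply lintegral_congr
          intro ω
          rw [Finset.sum_range_succ, add_pow]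
      _ = ∑ j ∈ Finset.range (k+1), ∫⁻ ω,
            (∑ i ∈ Finset.range n, ENNReal.ofReal |φ (ξ i ω)|) ^ j
              * (ENNReal.ofReal |φ (ξ n ω)|) ^ (k - j) * (k.choose j : ℝ≥0∞) ∂P := by
          apply lintegral_finset_sum
          intro j _
          exact (((hSmeas n).pow_const j).mul ((hYmeas n).pow_const (k-j))).mul_const _
      _ = ∑ j ∈ Finset.range (k+1), (k.choose j : ℝ≥0∞) * gg A n j * A (k - j) :=
          Finset.sum_congr rfl hterm
      _ = gg A (n+1) k := by
          rw [gg_succ, Finset.Nat.sum_antidiagonal_eq_sum_range_succ_mk]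

lemma restrict_factor (N : Ω → ℕ) (hNmeas : Measurable N)
    (ξ : ℕ → Ω → S) (hξmeas : ∀ n, Measurable (ξ n))
    (hjoint : IndepFun N (fun ω => fun n => ξ n ω) P)
    (H : (ℕ → S) → ℝ≥0∞) (hH : Measurable H) (n : ℕ) :
    ∫⁻ ω in {ω | N ω = n}, H (fun i => ξ i ω) ∂P
      = P {ω | N ω = n} * ∫⁻ ω, H (fun i => ξ i ω) ∂P := by
  have hAs : MeasurableSet {ω | N ω = n} := hNmeas (measurableSet_singleton n)
  have hVmeas : Measurable (fun ω => fun i => ξ i ω) := measurable_pi_lambda _ hξmeas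
  set ind : ℕ → ℝ≥0∞ := fun m => if m = n then 1 else 0 with hind
  have hindmeas : Measurable ind := measurable_of_countable ind
  have hip : IndepFun (fun ω => ind (N ω)) (fun ω => H (fun i => ξ i ω)) P :=
    hjoint.comp hindmeas hH
  have heq : ∀ ω, Set.indicator {ω | N ω = n} (fun ω => H (fun i => ξ i ω)) ω
      = ind (N ω) * H (fun i => ξ i ω) := by
    intro ω
    by_cases h : N ω = n <;> simp [Set.indicator, h, hind]
  calc ∫⁻ ω in {ω | N ω = n}, H (fun i => ξ i ω) ∂P
      = ∫⁻ ω, Set.indicator {ω | N ω = n} (fun ω => H (fun i => ξ i ω)) ω ∂P :=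
        (lintegral_indicator hAs _).symm
    _ = ∫⁻ ω, ind (N ω) * H (fun i => ξ i ω) ∂P := lintegral_congr heq
    _ = (∫⁻ ω, ind (N ω) ∂P) * ∫⁻ ω, H (fun i => ξ i ω) ∂P :=
        lintegral_mul_eq_lintegral_mul_lintegral_of_indepFun''
          (hindmeas.comp hNmeas).aemeasurable (hH.comp hVmeas).aemeasurable hip
    _ = P {ω | N ω = n} * ∫⁻ ω, H (fun i => ξ i ω) ∂P := by
        congr 1
        have h2 : (fun ω => ind (N ω)) = Set.indicator {ω | N ω = n} (fun _ => (1:ℝ≥0∞)) := by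
          funext ω; by_cases h : N ω = n <;> simp [Set.indicator, h, hind]
        rw [h2, lintegral_indicator hAs, setLIntegral_one]

end Prob

end CPAux

open CPAux

/-- **Upper bound for even moments of a compound Poisson sum.** -/
theorem stmt_4 {Ω : Type*} [MeasurableSpace Ω] (P : Measure Ω) [IsProbabilityMeasure P]
    {S : Type*} [MeasurableSpace S] (π : Measure S) [IsProbabilityMeasure π]
    (lam : ℝ) (hlam : 0 < lam)
    (N : Ω → ℕ) (hNmeas : Measurable N)
    (hNpois : ∀ n : ℕ,
      P {ω | N ω = n} = ENNReal.ofReal (Real.exp (-lam) * lam ^ n / n.factorial))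
    (ξ : ℕ → Ω → S) (hξmeas : ∀ n, Measurable (ξ n))
    (hlaw : ∀ n, Measure.map (ξ n) P = π)
    (hiid : iIndepFun ξ P)
    (hjoint : IndepFun N (fun ω => fun n => ξ n ω) P)
    (φ : S → ℝ) (hφ : Measurable φ)
    (p : ℕ) (hp : 0 < p) (hpeven : Even p)
    (hmom : Integrable (fun s => |φ s| ^ p) π)
    (hmono : ∀ k : ℕ, 1 ≤ k → k ≤ p →
      lam * ∫ s, |φ s| ^ k ∂π ≤ (lam * ∫ s, |φ s| ^ p ∂π) ^ ((k : ℝ) / p)) :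
    ∫ ω, |∑ n ∈ Finset.range (N ω), φ (ξ n ω)| ^ p ∂P ≤
      Real.exp 1 * p ^ p * (lam * ∫ s, |φ s| ^ p ∂π) := by
  set M : ℝ := lam * ∫ s, |φ s| ^ p ∂π with hMdef
  have hM0 : 0 ≤ M := mul_nonneg hlam.le (integral_nonneg fun s => by positivity)
  have hR0 : 0 ≤ Real.exp 1 * p ^ p * M := by positivity
  by_cases hI : Integrable (fun ω => |∑ n ∈ Finset.range (N ω), φ (ξ n ω)| ^ p) P
  swap
  · rw [integral_undef hI]; exact hR0
  -- notation
  set A : ℕ → ℝ≥0∞ := fun j => ∫⁻ s, ENNReal.ofReal |φ s| ^ j ∂π with hA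
  set W : ℕ → ℝ≥0∞ := fun n => P {ω | N ω = n} with hW
  set Mh : ℝ≥0∞ := ENNReal.ofReal M with hMh
  set mu : ℕ → ℝ≥0∞ := fun k => ∑' n, W n * gg A n k with hmu
  -- partition facts
  have hE : ∀ n : ℕ, MeasurableSet {ω | N ω = n} := fun n => hNmeas (measurableSet_singleton n)
  have hdisj : Pairwise (Function.onFun Disjoint fun n : ℕ => {ω | N ω = n}) := by
    intro m n hmn
    simp only [Function.onFun, Set.disjoint_left]
    intro ω h1 h2
    exact hmn (by rw [← h1, ← h2])
  have hunion : (⋃ n : ℕ, {ω | N ω = n}) = Set.univ := by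
    ext ω; simp
  have hW1 : ∑' n, W n = 1 := by
    rw [hW]
    simp only
    rw [← measure_iUnion hdisj hE, hunion, measure_univ]
  -- A basics
  have hA0 : A 0 = 1 := by
    rw [hA]
    simp only [pow_zero]
    rw [lintegral_one, measure_univ]
  have hAint : ∀ m : ℕ, 1 ≤ m → m ≤ p → Integrable (fun s => |φ s| ^ m) π := by
    intro m h1 h2
    refine Integrable.mono ((integrable_const (1:ℝ)).add hmom)
      ((hφ.abs.pow_const m)).aestronglyMeasurable (ae_of_all _ fun s => ?_)
    have hnn : (0:ℝ) ≤ |φ s| ^ m := by positivity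
    have hnn2 : (0:ℝ) ≤ 1 + |φ s| ^ p := by positivity
    simp only [Pi.add_apply, Real.norm_eq_abs]
    rw [abs_of_nonneg hnn, abs_of_nonneg hnn2]
    rcases le_or_gt (|φ s|) 1 with h | h
    · have : |φ s| ^ m ≤ 1 := pow_le_one₀ (abs_nonneg _) h
      nlinarith [pow_nonneg (abs_nonneg (φ s)) p]
    · have : |φ s| ^ m ≤ |φ s| ^ p := pow_le_pow_right₀ h.le h2
      nlinarith
  have hAeqR : ∀ m : ℕ, 1 ≤ m → m ≤ p → A m = ENNReal.ofReal (∫ s, |φ s| ^ m ∂π) := by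
    intro m h1 h2
    rw [hA]
    simp only
    rw [← lintegral_congr (fun s => (ENNReal.ofReal_pow (abs_nonneg (φ s)) m))]
    exact (MeasureTheory.ofReal_integral_eq_lintegral_ofReal (hAint m h1 h2)
      (ae_of_all _ fun s => by positivity)).symm
  have hnu : ∀ m : ℕ, 1 ≤ m → m ≤ p →
      ENNReal.ofReal lam * A m ≤ Mh ^ ((m:ℝ)/(p:ℝ)) := by
    intro m h1 h2
    rw [hAeqR m h1 h2, ← ENNReal.ofReal_mul hlam.le, hMh]
    refine le_trans (ENNReal.ofReal_le_ofReal (hmono m h1 h2)) ?_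
    rw [ENNReal.ofReal_rpow_of_nonneg hM0 (by positivity)]
  -- recursion for mu
  have hWrec : ∀ n : ℕ, W (n+1) * ((n:ℝ≥0∞)+1) = ENNReal.ofReal lam * W n := by
    intro n
    rw [hW]
    simp only
    rw [hNpois, hNpois]
    have h1 : ((n:ℝ≥0∞)+1) = ENNReal.ofReal ((n:ℝ)+1) := by
      rw [ENNReal.ofReal_add (by positivity) (by norm_num), ENNReal.ofReal_natCast,
        ENNReal.ofReal_one]
    rw [h1, ← ENNReal.ofReal_mul (by positivity), ← ENNReal.ofReal_mul hlam.le]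
    congr 1
    rw [Nat.factorial_succ]
    have hfn : (n.factorial : ℝ) ≠ 0 := by positivity
    field_simp
    push_cast
    ring
  have hrec : ∀ k : ℕ, mu (k+1) = ∑ ji ∈ Finset.HasAntidiagonal.antidiagonal k,
      ((k.choose ji.1 : ℝ≥0∞) * (ENNReal.ofReal lam * A (ji.2+1))) * mu ji.1 := by
    intro k
    rw [hmu]
    simp only
    rw [tsum_eq_zero_add' ENNReal.summable]
    rw [gg_zero]
    simp only [Nat.succ_ne_zero, if_false, mul_zero, zero_add]
    have hterm : ∀ n : ℕ, W (n+1) * gg A (n+1) (k+1)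
        = ∑ ji ∈ Finset.HasAntidiagonal.antidiagonal k,
            ((k.choose ji.1 : ℝ≥0∞) * (ENNReal.ofReal lam * A (ji.2+1))) * (W n * gg A n ji.1) := by
      intro n
      rw [gg_stein, ← mul_assoc, hWrec n, Finset.mul_sum]
      apply Finset.sum_congr rfl
      rintro ⟨j, i⟩ _
      ring
    rw [tsum_congr hterm]
    rw [Summable.tsum_finsetSum (fun ji _ => ENNReal.summable)]
    apply Finset.sum_congr rfl
    rintro ⟨j, i⟩ _
    rw [← ENNReal.tsum_mul_left]
  -- the key bound by induction
  have hB : ∀ k : ℕ, k ≤ p → mu k ≤ (Bell k : ℝ≥0∞) * Mh ^ ((k:ℝ)/(p:ℝ)) := by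
    intro k
    induction k using Nat.strong_induction_on with
    | _ k ih =>
      match k with
      | 0 =>
        intro _
        have : mu 0 = 1 := by
          rw [hmu]
          simp only
          have : ∀ n : ℕ, W n * gg A n 0 = W n := fun n => by rw [gg_zero' A n hA0, mul_one]
          rw [tsum_congr this, hW1]
        rw [this]
        simp [Bell]
      | (k+1) =>
        intro hkp
        rw [hrec k]
        have hstep : ∀ ji ∈ Finset.HasAntidiagonal.antidiagonal k,
            ((k.choose ji.1 : ℝ≥0∞) * (ENNReal.ofReal lam * A (ji.2+1))) * mu ji.1
              ≤ ((k.choose ji.1 * Bell ji.1 : ℕ) : ℝ≥0∞) * Mh ^ (((k:ℝ)+1)/(p:ℝ)) := by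
          rintro ⟨j, i⟩ hji
          have hji' : j + i = k := Finset.HasAntidiagonal.mem_antidiagonal.mp hji
          have h1 : ENNReal.ofReal lam * A (i+1) ≤ Mh ^ (((i:ℝ)+1)/(p:ℝ)) := by
            have := hnu (i+1) (by omega) (by omega)
            simpa using this
          have h2 : mu j ≤ (Bell j : ℝ≥0∞) * Mh ^ ((j:ℝ)/(p:ℝ)) :=
            ih j (by omega) (by omega)
          calc ((k.choose j : ℝ≥0∞) * (ENNReal.ofReal lam * A (i+1))) * mu j
              ≤ ((k.choose j : ℝ≥0∞) * Mh ^ (((i:ℝ)+1)/(p:ℝ)))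
                * ((Bell j : ℝ≥0∞) * Mh ^ ((j:ℝ)/(p:ℝ))) :=
                mul_le_mul' (mul_le_mul' le_rfl h1) h2
            _ = ((k.choose j : ℝ≥0∞) * (Bell j : ℝ≥0∞))
                * (Mh ^ (((i:ℝ)+1)/(p:ℝ)) * Mh ^ ((j:ℝ)/(p:ℝ))) := by ring
            _ = ((k.choose j * Bell j : ℕ) : ℝ≥0∞) * Mh ^ (((k:ℝ)+1)/(p:ℝ)) := by
                rw [← ENNReal.rpow_add_of_nonneg _ _ (by positivity) (by positivity)]
                have he : ((i:ℝ)+1)/(p:ℝ) + (j:ℝ)/(p:ℝ) = ((k:ℝ)+1)/(p:ℝ) := by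
                  rw [← add_div]
                  congr 1
                  have : (j:ℝ) + i = k := by exact_mod_cast hji'
                  linarith
                rw [he]
                push_cast
                ring
        refine le_trans (Finset.sum_le_sum hstep) ?_
        rw [← Finset.sum_mul]
        have hsum : ∑ ji ∈ Finset.HasAntidiagonal.antidiagonal k, ((k.choose ji.1 * Bell ji.1 : ℕ) : ℝ≥0∞)
            = (Bell (k+1) : ℝ≥0∞) := by
          rw [← Nat.cast_sum]
          congr 1
          rw [Finset.Nat.sum_antidiagonal_eq_sum_range_succ_mk, Bell_succ]
        rw [hsum]
        apply le_of_eq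
        congr 2
        push_cast
        ring
  -- splitting the integral over the value of N
  have hsplit : ∫⁻ ω, (∑ i ∈ Finset.range (N ω), ENNReal.ofReal |φ (ξ i ω)|) ^ p ∂P = mu p := by
    calc ∫⁻ ω, (∑ i ∈ Finset.range (N ω), ENNReal.ofReal |φ (ξ i ω)|) ^ p ∂P
        = ∫⁻ ω in ⋃ n : ℕ, {ω | N ω = n},
            (∑ i ∈ Finset.range (N ω), ENNReal.ofReal |φ (ξ i ω)|) ^ p ∂P := by
          rw [hunion, setLIntegral_univ]
      _ = ∑' n, ∫⁻ ω in {ω | N ω = n},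
            (∑ i ∈ Finset.range (N ω), ENNReal.ofReal |φ (ξ i ω)|) ^ p ∂P :=
          lintegral_iUnion hE hdisj _
      _ = mu p := by
          rw [hmu]
          apply tsum_congr
          intro n
          have hH : Measurable (fun v : ℕ → S =>
              (∑ i ∈ Finset.range n, ENNReal.ofReal |φ (v i)|) ^ p) :=
            (Finset.measurable_sum _ (fun i _ =>
              ((hφ.comp (measurable_pi_apply i)).abs).ennreal_ofReal)).pow_const p
          have e1 : ∫⁻ ω in {ω | N ω = n},
              (∑ i ∈ Finset.range (N ω), ENNReal.ofReal |φ (ξ i ω)|) ^ p ∂P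
              = ∫⁻ ω in {ω | N ω = n},
              (fun v : ℕ → S => (∑ i ∈ Finset.range n, ENNReal.ofReal |φ (v i)|) ^ p)
                (fun i => ξ i ω) ∂P := by
            apply setLIntegral_congr_fun (hE n)
            intro ω hω
            beta_reduce
            have : N ω = n := hω
            rw [this]
          rw [e1, restrict_factor N hNmeas ξ hξmeas hjoint _ hH n]
          congr 1
          exact moment_sum ξ hξmeas hlaw hiid φ hφ n p
  -- pointwise domination
  have hdom : ∫⁻ ω, ENNReal.ofReal (|∑ n ∈ Finset.range (N ω), φ (ξ n ω)| ^ p) ∂P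
      ≤ ∫⁻ ω, (∑ i ∈ Finset.range (N ω), ENNReal.ofReal |φ (ξ i ω)|) ^ p ∂P := by
    apply lintegral_mono
    intro ω
    dsimp only
    rw [ENNReal.ofReal_pow (abs_nonneg _)]
    apply pow_le_pow_left₀ zero_le
    calc ENNReal.ofReal |∑ n ∈ Finset.range (N ω), φ (ξ n ω)|
        ≤ ENNReal.ofReal (∑ n ∈ Finset.range (N ω), |φ (ξ n ω)|) :=
          ENNReal.ofReal_le_ofReal (Finset.abs_sum_le_sum_abs _ _)
      _ = ∑ n ∈ Finset.range (N ω), ENNReal.ofReal |φ (ξ n ω)| :=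
          ENNReal.ofReal_sum_of_nonneg (fun i _ => abs_nonneg _)
  -- final chain
  have hfinal : ∫⁻ ω, ENNReal.ofReal (|∑ n ∈ Finset.range (N ω), φ (ξ n ω)| ^ p) ∂P
      ≤ ENNReal.ofReal (Real.exp 1 * p ^ p * M) := by
    refine le_trans hdom ?_
    rw [hsplit]
    refine le_trans (hB p le_rfl) ?_
    have hpp : ((p:ℝ)/(p:ℝ)) = 1 := div_self (by positivity)
    rw [hpp, ENNReal.rpow_one]
    calc (Bell p : ℝ≥0∞) * Mh ≤ ((p^p : ℕ) : ℝ≥0∞) * Mh :=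
          mul_le_mul' (by exact_mod_cast Bell_le p) le_rfl
      _ = ENNReal.ofReal ((p:ℝ)^p) * ENNReal.ofReal M := by
          rw [hMh, ← ENNReal.ofReal_natCast (p^p)]
          push_cast
          ring_nf
      _ = ENNReal.ofReal ((p:ℝ)^p * M) := (ENNReal.ofReal_mul (by positivity)).symm
      _ ≤ ENNReal.ofReal (Real.exp 1 * p ^ p * M) := by
          apply ENNReal.ofReal_le_ofReal
          have h1 : (1:ℝ) ≤ Real.exp 1 := by
            have := Real.add_one_le_exp (1:ℝ)
            linarith
          nlinarith [pow_nonneg (Nat.cast_nonneg (α := ℝ) p) p]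
  rw [MeasureTheory.integral_eq_lintegral_of_nonneg_ae
    (ae_of_all _ fun ω => by positivity) hI.aestronglyMeasurable]
  exact ENNReal.toReal_le_of_le_ofReal hR0 hfinal
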